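/- Let σ₁ and σ₂ be axis-parallel squares arising as cells of a quadtree (i.e., each is obtained from a fixed root square by repeatedly subdividing a square into its four congruent quadrants). If the distance between the boundaries of σ₁ and σ₂ is positive, then this distance is at least min(size(σ₁), size(σ₂)), where size denotes the edge length. -/

import Mathlib

open Set

/-- A dyadic (quadtree) square: `[a·2^j, (a+1)·2^j] × [b·2^j, (b+1)·2^j]`. -/
def dyadicSquare (a b j : ℤ) : Set (EuclideanSpace ℝ (Fin 2)) :=
  {x | x 0 ∈ Icc ((a : ℝ) * 2 ^ j) (((a : ℝ) + 1) * 2 ^ j) ∧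
       x 1 ∈ Icc ((b : ℝ) * 2 ^ j) (((b : ℝ) + 1) * 2 ^ j)}

/-- The distance between two sets: infimum of pairwise distances. -/
noncomputable def setDist (s t : Set (EuclideanSpace ℝ (Fin 2))) : ℝ :=
  sInf {d | ∃ x ∈ s, ∃ y ∈ t, d = dist x y}

lemma key_mul (p q j : ℤ) (h : (p : ℝ) * 2 ^ j < (q : ℝ) * 2 ^ j) :
    (p : ℝ) * 2 ^ j + 2 ^ j ≤ (q : ℝ) * 2 ^ j := by
  have h2 : (0:ℝ) < 2 ^ j := zpow_pos (by norm_num) _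
  have hpq : (p : ℝ) < q := lt_of_mul_lt_mul_right h h2.le
  have : (p : ℝ) + 1 ≤ q := by exact_mod_cast Int.add_one_le_iff.mpr (by exact_mod_cast hpq)
  nlinarith

lemma gap_ge (a₁ j₁ a₂ j₂ : ℤ) (h : ((a₁ : ℝ) + 1) * 2 ^ j₁ < (a₂ : ℝ) * 2 ^ j₂) :
    ((a₁ : ℝ) + 1) * 2 ^ j₁ + min ((2:ℝ) ^ j₁) ((2:ℝ) ^ j₂) ≤ (a₂ : ℝ) * 2 ^ j₂ := by
  rcases le_total j₁ j₂ with hj | hj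
  · set n := (j₂ - j₁).toNat with hn
    have hsplit : (2:ℝ) ^ j₂ = (2:ℝ) ^ (n:ℤ) * 2 ^ j₁ := by
      rw [← zpow_add₀ (by norm_num : (2:ℝ) ≠ 0)]
      congr 1; omega
    have h2 : (a₂ : ℝ) * 2 ^ j₂ = ((a₂ * 2 ^ n : ℤ) : ℝ) * 2 ^ j₁ := by
      rw [hsplit, zpow_natCast]; push_cast; ring
    have h1 : ((a₁ : ℝ) + 1) * 2 ^ j₁ = (((a₁ + 1 : ℤ)) : ℝ) * 2 ^ j₁ := by push_cast; ring
    rw [h2, h1] at h ⊢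
    have := key_mul (a₁ + 1) (a₂ * 2 ^ n) j₁ h
    have hmin : min ((2:ℝ) ^ j₁) ((2:ℝ) ^ j₂) ≤ 2 ^ j₁ := min_le_left _ _
    linarith
  · set n := (j₁ - j₂).toNat with hn
    have hsplit : (2:ℝ) ^ j₁ = (2:ℝ) ^ (n:ℤ) * 2 ^ j₂ := by
      rw [← zpow_add₀ (by norm_num : (2:ℝ) ≠ 0)]
      congr 1; omega
    have h1 : ((a₁ : ℝ) + 1) * 2 ^ j₁ = (((a₁ + 1) * 2 ^ n : ℤ) : ℝ) * 2 ^ j₂ := by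
      rw [hsplit, zpow_natCast]; push_cast; ring
    rw [h1] at h ⊢
    have := key_mul ((a₁ + 1) * 2 ^ n) a₂ j₂ h
    have hmin : min ((2:ℝ) ^ j₁) ((2:ℝ) ^ j₂) ≤ 2 ^ j₂ := min_le_right _ _
    linarith

/-- Either the two dyadic intervals intersect, or all points are at distance ≥ min size. -/
lemma interval_dichotomy (a₁ j₁ a₂ j₂ : ℤ) :
    (∃ t : ℝ, t ∈ Icc ((a₁ : ℝ) * 2 ^ j₁) (((a₁ : ℝ) + 1) * 2 ^ j₁) ∧
              t ∈ Icc ((a₂ : ℝ) * 2 ^ j₂) (((a₂ : ℝ) + 1) * 2 ^ j₂)) ∨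
    (∀ x ∈ Icc ((a₁ : ℝ) * 2 ^ j₁) (((a₁ : ℝ) + 1) * 2 ^ j₁),
     ∀ y ∈ Icc ((a₂ : ℝ) * 2 ^ j₂) (((a₂ : ℝ) + 1) * 2 ^ j₂),
       min ((2:ℝ) ^ j₁) ((2:ℝ) ^ j₂) ≤ |x - y|) := by
  by_cases h1 : ((a₁ : ℝ) + 1) * 2 ^ j₁ < (a₂ : ℝ) * 2 ^ j₂
  · right
    intro x hx y hy
    have := gap_ge a₁ j₁ a₂ j₂ h1
    have hxy : x + min ((2:ℝ) ^ j₁) ((2:ℝ) ^ j₂) ≤ y := by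
      have := hx.2; have := hy.1; linarith
    rw [abs_sub_comm]
    calc min ((2:ℝ) ^ j₁) ((2:ℝ) ^ j₂) ≤ y - x := by linarith
      _ ≤ |y - x| := le_abs_self _
  · by_cases h2 : ((a₂ : ℝ) + 1) * 2 ^ j₂ < (a₁ : ℝ) * 2 ^ j₁
    · right
      intro x hx y hy
      have := gap_ge a₂ j₂ a₁ j₁ h2
      have hxy : y + min ((2:ℝ) ^ j₁) ((2:ℝ) ^ j₂) ≤ x := by
        have := hx.1; have := hy.2
        rw [min_comm] at *; linarith [min_comm ((2:ℝ)^j₁) ((2:ℝ)^j₂)]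
      calc min ((2:ℝ) ^ j₁) ((2:ℝ) ^ j₂) ≤ x - y := by linarith
        _ ≤ |x - y| := le_abs_self _
    · left
      push_neg at h1 h2
      refine ⟨max ((a₁ : ℝ) * 2 ^ j₁) ((a₂ : ℝ) * 2 ^ j₂), ⟨le_max_left _ _, ?_⟩,
        ⟨le_max_right _ _, ?_⟩⟩
      · apply max_le
        · have h2pos : (0:ℝ) < 2 ^ j₁ := zpow_pos (by norm_num) _
          nlinarith
        · exact h1
      · apply max_le
        · exact h2
        · have h2pos : (0:ℝ) < 2 ^ j₂ := zpow_pos (by norm_num) _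
          nlinarith

lemma coord_le_dist (x y : EuclideanSpace ℝ (Fin 2)) (i : Fin 2) :
    |x i - y i| ≤ dist x y := by
  rw [EuclideanSpace.dist_eq]
  have : |x i - y i| = Real.sqrt ((dist (x i) (y i)) ^ 2) := by
    rw [Real.sqrt_sq_eq_abs, Real.dist_eq, abs_abs]
  rw [this]
  apply Real.sqrt_le_sqrt
  exact Finset.single_le_sum (f := fun j => dist (x j) (y j) ^ 2) (fun j _ => sq_nonneg _) (Finset.mem_univ i)

/-- If the distance between two quadtree cells is positive, then it is at least the
minimum of their edge lengths. -/
theorem stmt1 (a₁ b₁ j₁ a₂ b₂ j₂ : ℤ)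
    (σ₁ σ₂ : Set (EuclideanSpace ℝ (Fin 2)))
    (hσ₁ : σ₁ = dyadicSquare a₁ b₁ j₁) (hσ₂ : σ₂ = dyadicSquare a₂ b₂ j₂)
    (hpos : 0 < setDist σ₁ σ₂) :
    min ((2 : ℝ) ^ j₁) ((2 : ℝ) ^ j₂) ≤ setDist σ₁ σ₂ := by
  subst hσ₁ hσ₂
  set D := {d | ∃ x ∈ dyadicSquare a₁ b₁ j₁, ∃ y ∈ dyadicSquare a₂ b₂ j₂, d = dist x y} with hD
  -- the squares are nonempty
  have h2p1 : (0:ℝ) < 2 ^ j₁ := zpow_pos (by norm_num) _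
  have h2p2 : (0:ℝ) < 2 ^ j₂ := zpow_pos (by norm_num) _
  have hp1 : (!₂[(a₁:ℝ) * 2 ^ j₁, (b₁:ℝ) * 2 ^ j₁] : EuclideanSpace ℝ (Fin 2)) ∈
      dyadicSquare a₁ b₁ j₁ := by
    constructor <;> simp [Matrix.cons_val_zero, Matrix.cons_val_one, Matrix.head_cons] <;>
      nlinarith
  have hp2 : (!₂[(a₂:ℝ) * 2 ^ j₂, (b₂:ℝ) * 2 ^ j₂] : EuclideanSpace ℝ (Fin 2)) ∈
      dyadicSquare a₂ b₂ j₂ := by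
    constructor <;> simp [Matrix.cons_val_zero, Matrix.cons_val_one, Matrix.head_cons] <;>
      nlinarith
  have hne : D.Nonempty := ⟨_, _, hp1, _, hp2, rfl⟩
  rcases interval_dichotomy a₁ j₁ a₂ j₂ with ⟨t, ht₁, ht₂⟩ | hX
  · rcases interval_dichotomy b₁ j₁ b₂ j₂ with ⟨s, hs₁, hs₂⟩ | hY
    · -- both coordinates intersect: common point, distance 0, contradiction
      exfalso
      have hp : (!₂[t, s] : EuclideanSpace ℝ (Fin 2)) ∈ dyadicSquare a₁ b₁ j₁ ∧
          (!₂[t, s] : EuclideanSpace ℝ (Fin 2)) ∈ dyadicSquare a₂ b₂ j₂ := by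
        constructor <;> constructor <;>
          simpa [dyadicSquare, Matrix.cons_val_zero, Matrix.cons_val_one, Matrix.head_cons]
            using ‹_›
      have h0 : (0:ℝ) ∈ D := ⟨_, hp.1, _, hp.2, (dist_self _).symm⟩
      have hbdd : BddBelow D := ⟨0, by rintro d ⟨x, _, y, _, rfl⟩; exact dist_nonneg⟩
      have : setDist (dyadicSquare a₁ b₁ j₁) (dyadicSquare a₂ b₂ j₂) ≤ 0 := csInf_le hbdd h0
      linarith
    · -- y-coordinates separated
      apply le_csInf hne
      rintro d ⟨x, hx, y, hy, rfl⟩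
      calc min ((2:ℝ) ^ j₁) ((2:ℝ) ^ j₂) ≤ |x 1 - y 1| := hY _ hx.2 _ hy.2
        _ ≤ dist x y := coord_le_dist x y 1
  · apply le_csInf hne
    rintro d ⟨x, hx, y, hy, rfl⟩
    calc min ((2:ℝ) ^ j₁) ((2:ℝ) ^ j₂) ≤ |x 0 - y 0| := hX _ hx.1 _ hy.1
      _ ≤ dist x y := coord_le_dist x y 0
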